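/- Elimination lemma for monoid Gröbner bases: write F = F₀ ⊕ ℕt for a basis element t, and assume the monomial order satisfies t ≻ f for all f ∈ F₀. If B is a Gröbner basis for a congruence R on F, then B ∩ (F₀ × F₀) is a Gröbner basis for the restricted congruence R ∩ (F₀ × F₀) on F₀. -/

import Mathlib

/-- Eliminating a variable: Write `F = F₀ ⊕ ℕt`, modelled as
`F = (Fin n → ℕ) × ℕ` with `F₀` the elements with vanishing `t`-coordinate and
`t = (0, 1)`.  Let `lt` be a total monoidal well-order on `F` with `t ≻ f` for all
`f ∈ F₀`, let `c` be a congruence on `F` and `B` a Gröbner basis for `c`.  Then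
`B₀ = B ∩ (F₀ × F₀)` is a Gröbner basis for the restricted congruence `c ∩ (F₀ × F₀)`
on `F₀`: the initial terms of the restricted congruence are exactly the translates of
initial terms of elements of `B₀`. -/
theorem eliminate_a_variable (n : ℕ)
    (lt : ((Fin n → ℕ) × ℕ) → ((Fin n → ℕ) × ℕ) → Prop)
    (hwo : IsWellOrder ((Fin n → ℕ) × ℕ) lt)
    (hmon : ∀ a b c : (Fin n → ℕ) × ℕ, lt a b → lt (a + c) (b + c))
    (htop : ∀ f : Fin n → ℕ, lt (f, 0) ((0 : Fin n → ℕ), 1))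
    (c : AddCon ((Fin n → ℕ) × ℕ))
    (B : Finset (((Fin n → ℕ) × ℕ) × ((Fin n → ℕ) × ℕ)))
    (hB : ∀ p ∈ B, c p.1 p.2 ∧ lt p.2 p.1)
    (hGB : {x : (Fin n → ℕ) × ℕ | ∃ y, lt y x ∧ c x y} =
      {x : (Fin n → ℕ) × ℕ | ∃ p ∈ B, ∃ f, x = p.1 + f}) :
    {x : Fin n → ℕ | ∃ y : Fin n → ℕ, lt (y, 0) (x, 0) ∧ c (x, 0) (y, 0)} =
      {x : Fin n → ℕ | ∃ p ∈ B, p.1.2 = 0 ∧ p.2.2 = 0 ∧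
        ∃ f : Fin n → ℕ, (x, (0 : ℕ)) = p.1 + (f, 0)} := by
  have nodesc : ∀ d a : (Fin n → ℕ) × ℕ, ¬ lt (a + d) a := by
    intro d a
    induction a using hwo.toIsWellFounded.wf.induction with
    | _ a ih => exact fun h => ih (a + d) h (hmon _ _ d h)
  have hasymm : ∀ a b : (Fin n → ℕ) × ℕ, lt a b → lt b a → False := by
    intro a b h1 h2
    exact (hwo.toIsWellFounded.wf.isIrrefl.irrefl a) (by haveI := hwo; exact trans_of lt h1 h2)
  -- key: anything with positive second coordinate is greater than anything of the form (g,0)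
  have key : ∀ (g : Fin n → ℕ) (a : (Fin n → ℕ) × ℕ), a.2 ≠ 0 → lt (g, 0) a := by
    intro g a ha
    obtain ⟨k, hk⟩ := Nat.exists_eq_succ_of_ne_zero ha
    have h1 : lt ((g, 0) + (a.1, k)) (((0 : Fin n → ℕ), 1) + (a.1, k)) :=
      hmon _ _ _ (htop g)
    have ha' : ((0 : Fin n → ℕ), 1) + (a.1, k) = a := by
      ext <;> simp [hk, Nat.add_comm]
    rw [ha'] at h1
    rcases (by haveI := hwo; exact trichotomous_of lt (g, 0) ((g, 0) + (a.1, k)) : lt (g, 0) ((g, 0) + (a.1, k)) ∨ (g, 0) = (g, 0) + (a.1, k) ∨ lt ((g, 0) + (a.1, k)) (g, 0)) with h | h | h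
    · exact (by haveI := hwo; exact trans_of lt h h1)
    · rwa [h]
    · exact absurd h (nodesc _ _)
  ext x
  simp only [Set.mem_setOf_eq]
  constructor
  · rintro ⟨y, hlt, hc⟩
    have hx : (x, (0:ℕ)) ∈ {x : (Fin n → ℕ) × ℕ | ∃ y, lt y x ∧ c x y} :=
      ⟨(y, 0), hlt, hc⟩
    rw [hGB] at hx
    obtain ⟨p, hpB, f, hf⟩ := hx
    have h2 : p.1.2 + f.2 = 0 := by
      have := congrArg Prod.snd hf; simpa using this.symm
    have hp12 : p.1.2 = 0 := (Nat.add_eq_zero.mp h2).1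
    have hf2 : f.2 = 0 := (Nat.add_eq_zero.mp h2).2
    refine ⟨p, hpB, hp12, ?_, f.1, ?_⟩
    · by_contra hne
      have hp1 : p.1 = (p.1.1, 0) := by ext <;> simp [hp12]
      have := key p.1.1 p.2 hne
      exact hasymm _ _ this (hp1 ▸ (hB p hpB).2)
    · have : f = (f.1, 0) := by ext <;> simp [hf2]
      rw [hf, this]
  · rintro ⟨p, hpB, hp12, hp22, f, hf⟩
    refine ⟨p.2.1 + f, ?_, ?_⟩
    · have h := hmon _ _ (f, 0) (hB p hpB).2
      have e1 : p.2 + ((f, 0) : (Fin n → ℕ) × ℕ) = (p.2.1 + f, 0) := by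
        ext <;> simp [hp22]
      rw [e1, ← hf] at h
      exact h
    · have h := c.add (hB p hpB).1 (c.refl ((f, 0) : (Fin n → ℕ) × ℕ))
      have e1 : p.2 + ((f, 0) : (Fin n → ℕ) × ℕ) = (p.2.1 + f, 0) := by
        ext <;> simp [hp22]
      rw [e1, ← hf] at h
      exact h
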